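/- Cauchy integral representation of φ_ℓ on a circle: for an N×N complex matrix L whose eigenvalues all lie strictly inside a circle Γ of radius R centered at c (with Γ not passing through any eigenvalue), φ_ℓ(L) = (1/(2πi)) ∮_Γ φ_ℓ(s)(sI - L)^{-1} ds, where φ_ℓ(s) = ∑_{i=0}^∞ s^i/(i+ℓ)!. -/

import Mathlib

open scoped Nat Real
open Matrix

/-- Power-growth bound from the spectral radius in a complex Banach algebra. -/
lemma aux_pow_bound {A : Type*} [NormedRing A] [NormedAlgebra ℂ A] [CompleteSpace A]
    [Nontrivial A] (a : A) (R : ℝ) (hR : 0 < R) (h : ∀ μ ∈ spectrum ℂ a, ‖μ‖ < R) :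
    ∃ r C : ℝ, 0 < r ∧ r < R ∧ 0 < C ∧ ∀ n : ℕ, ‖a ^ n‖ ≤ C * r ^ n := by
  have hρ : spectralRadius ℂ a < ENNReal.ofReal R := by
    have := spectrum.spectralRadius_lt_of_forall_lt a
      (r := R.toNNReal) (fun z hz => by
        have := h z hz
        simpa [← NNReal.coe_lt_coe, Real.coe_toNNReal _ hR.le] using this)
    simpa [ENNReal.ofReal] using this
  obtain ⟨t, htρ, htR⟩ := ENNReal.lt_iff_exists_nnreal_btwn.1 hρ
  have htR' : (t : ℝ) < R := by
    have := (ENNReal.lt_ofReal_iff_toReal_lt (by simp)).1 htR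
    simpa using this
  set r : ℝ := max (t : ℝ) (R / 2) with hrdef
  have hr0 : 0 < r := lt_max_of_lt_right (by linarith)
  have hrR : r < R := max_lt htR' (by linarith)
  -- Gelfand: eventually ‖a ^ n‖ ≤ r ^ n
  have hgel := spectrum.pow_nnnorm_pow_one_div_tendsto_nhds_spectralRadius a
  have hev : ∀ᶠ n : ℕ in Filter.atTop, (‖a ^ n‖₊ : ENNReal) ^ (1 / (n : ℝ)) < (t : ENNReal) :=
    hgel.eventually_lt_const htρ
  have hev2 : ∀ᶠ n : ℕ in Filter.atTop, ‖a ^ n‖ ≤ r ^ n := by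
    filter_upwards [hev, Filter.eventually_ge_atTop 1] with n hn hn1
    have hne : (n : ℝ) ≠ 0 := by positivity
    have h1 : ((‖a ^ n‖₊ : ENNReal) ^ (1 / (n : ℝ))) ^ (n : ℝ) ≤ (t : ENNReal) ^ (n : ℝ) :=
      ENNReal.rpow_le_rpow hn.le (by positivity)
    rw [← ENNReal.rpow_mul, one_div, inv_mul_cancel₀ hne, ENNReal.rpow_one,
      ENNReal.rpow_natCast] at h1
    have h2 : (‖a ^ n‖₊ : ENNReal) ≤ ((t ^ n : NNReal) : ENNReal) := by
      simpa [ENNReal.coe_pow] using h1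
    have h3 : ‖a ^ n‖₊ ≤ t ^ n := by exact_mod_cast h2
    calc ‖a ^ n‖ ≤ ((t ^ n : NNReal) : ℝ) := h3
    _ = (t : ℝ) ^ n := by push_cast; ring
    _ ≤ r ^ n := pow_le_pow_left₀ (by positivity) (le_max_left _ _) n
  obtain ⟨n₀, hn₀⟩ := Filter.eventually_atTop.1 hev2
  set C : ℝ := 1 + ∑ k ∈ Finset.range n₀, ‖a ^ k‖ / r ^ k with hCdef
  have hC1 : (1 : ℝ) ≤ C := by
    have : 0 ≤ ∑ k ∈ Finset.range n₀, ‖a ^ k‖ / r ^ k :=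
      Finset.sum_nonneg fun k _ => by positivity
    rw [hCdef]; linarith
  refine ⟨r, C, hr0, hrR, by linarith, fun n => ?_⟩
  rcases le_or_gt n₀ n with hn | hn
  · calc ‖a ^ n‖ ≤ r ^ n := hn₀ n hn
    _ ≤ C * r ^ n := le_mul_of_one_le_left (by positivity) hC1
  · have hmem : n ∈ Finset.range n₀ := Finset.mem_range.2 hn
    have : ‖a ^ n‖ / r ^ n ≤ ∑ k ∈ Finset.range n₀, ‖a ^ k‖ / r ^ k :=
      Finset.single_le_sum (f := fun k => ‖a ^ k‖ / r ^ k) (fun k _ => by positivity) hmem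
    have h4 : ‖a ^ n‖ / r ^ n ≤ C := by rw [hCdef]; linarith
    calc ‖a ^ n‖ = ‖a ^ n‖ / r ^ n * r ^ n := by field_simp
    _ ≤ C * r ^ n := by
        apply mul_le_mul_of_nonneg_right h4 (by positivity)

section LinftyWorld

attribute [local instance] Matrix.linftyOpNormedAddCommGroup Matrix.linftyOpNormedRing
  Matrix.linftyOpNormedAlgebra

/-- Entrywise power-growth bound for a matrix whose spectrum lies in the open ball of
radius `R` about `0`. -/
lemma exists_entry_pow_bound {N : ℕ} (M : Matrix (Fin N) (Fin N) ℂ) (R : ℝ) (hR : 0 < R)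
    (h : ∀ μ ∈ spectrum ℂ M, ‖μ‖ < R) :
    ∃ r C : ℝ, 0 < r ∧ r < R ∧ 0 < C ∧
      ∀ (n : ℕ) (i j : Fin N), ‖(M ^ n) i j‖ ≤ C * r ^ n := by
  rcases Nat.eq_zero_or_pos N with hN | hN
  · subst hN
    exact ⟨R / 2, 1, by linarith, by linarith, one_pos, fun n i j => i.elim0⟩
  haveI : NeZero N := ⟨hN.ne'⟩
  haveI : Nontrivial (Matrix (Fin N) (Fin N) ℂ) := Matrix.nonempty
  haveI : CompleteSpace (Matrix (Fin N) (Fin N) ℂ) := FiniteDimensional.complete ℂ _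
  obtain ⟨r, C, hr0, hrR, hC0, hb⟩ := aux_pow_bound M R hR (fun μ hμ => h μ hμ)
  refine ⟨r, C, hr0, hrR, hC0, fun n i j => ?_⟩
  have hentry : ‖(M ^ n) i j‖ ≤ ‖M ^ n‖ := by
    rw [Matrix.linfty_opNorm_def]
    have h1 : ‖(M ^ n) i j‖₊ ≤ ∑ j', ‖(M ^ n) i j'‖₊ :=
      Finset.single_le_sum (f := fun j' => ‖(M ^ n) i j'‖₊) (fun _ _ => zero_le)
        (Finset.mem_univ j)
    have h2 : (∑ j', ‖(M ^ n) i j'‖₊) ≤ Finset.univ.sup fun i' => ∑ j', ‖(M ^ n) i' j'‖₊ :=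
      Finset.le_sup (f := fun i' => ∑ j', ‖(M ^ n) i' j'‖₊) (Finset.mem_univ i)
    calc ‖(M ^ n) i j‖ = ((‖(M ^ n) i j‖₊ : ℝ)) := rfl
    _ ≤ _ := by exact_mod_cast h1.trans h2
  exact hentry.trans (hb n)

end LinftyWorld


attribute [local instance] Matrix.normedAddCommGroup Matrix.normedSpace


open MeasureTheory in
lemma swap_hasSum {E : Type*} [NormedAddCommGroup E] [NormedSpace ℝ E]
    (F : ℕ → ℝ → E) (g : ℝ → E) (bound : ℕ → ℝ)
    (hcont : ∀ n, Continuous (F n))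
    (hb : ∀ (n : ℕ) (θ : ℝ), θ ∈ Set.Ioc (0:ℝ) (2*π) → ‖F n θ‖ ≤ bound n)
    (hsum : Summable bound)
    (hpt : ∀ θ : ℝ, HasSum (fun n => F n θ) (g θ)) :
    HasSum (fun n => ∫ θ in (0:ℝ)..(2*π), F n θ) (∫ θ in (0:ℝ)..(2*π), g θ) := by
  have h2π : (0:ℝ) ≤ 2*π := by positivity
  have hvol : MeasureTheory.volume (Set.Ioc (0:ℝ) (2*π)) < ⊤ := by
    exact measure_Ioc_lt_top
  have hint : ∀ n, IntegrableOn (F n) (Set.Ioc (0:ℝ) (2*π)) := fun n =>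
    (hcont n).integrableOn_Ioc
  have hbnn : ∀ n, 0 ≤ bound n := fun n =>
    le_trans (norm_nonneg (F n π)) (hb n π ⟨Real.pi_pos, by linarith [Real.pi_pos]⟩)
  have hle : ∀ n, (∫ θ in Set.Ioc (0:ℝ) (2*π), ‖F n θ‖) ≤ 2*π * bound n := by
    intro n
    calc (∫ θ in Set.Ioc (0:ℝ) (2*π), ‖F n θ‖)
        ≤ ∫ _θ in Set.Ioc (0:ℝ) (2*π), bound n :=
          setIntegral_mono_on (hint n).norm (integrableOn_const hvol.ne)
            measurableSet_Ioc (fun θ hθ => hb n θ hθ)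
      _ = 2*π * bound n := by
          simp [setIntegral_const, Real.volume_Ioc, ENNReal.toReal_ofReal h2π, Real.pi_pos.le]
  have hsum2 : Summable fun n => ∫ θ in Set.Ioc (0:ℝ) (2*π), ‖F n θ‖ :=
    Summable.of_nonneg_of_le
      (fun n => integral_nonneg fun θ => norm_nonneg _) hle (hsum.mul_left (2*π))
  have H := hasSum_integral_of_summable_integral_norm (μ := volume.restrict (Set.Ioc (0:ℝ) (2*π)))
    hint hsum2
  rw [intervalIntegral.integral_of_le h2π]
  simp_rw [intervalIntegral.integral_of_le h2π]
  have : (∫ θ in Set.Ioc (0:ℝ) (2*π), g θ) = ∫ θ in Set.Ioc (0:ℝ) (2*π), ∑' n, F n θ := by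
    apply setIntegral_congr_fun measurableSet_Ioc
    intro θ _
    exact ((hpt θ).tsum_eq).symm
  rw [this]
  exact H

lemma resolvent_hasSum {N : ℕ} (L : Matrix (Fin N) (Fin N) ℂ) (c s : ℂ) {R r C : ℝ}
    (hR : 0 < R) (habs : ‖s - c‖ = R)
    (hr0 : 0 < r) (hrR : r < R) (hC : 0 < C)
    (hb : ∀ n : ℕ, ‖(L - c • (1 : Matrix (Fin N) (Fin N) ℂ)) ^ n‖ ≤ C * r ^ n) :
    HasSum (fun n : ℕ =>
        (((s - c) ^ (n+1))⁻¹) • (L - c • (1 : Matrix (Fin N) (Fin N) ℂ)) ^ n)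
      ((s • (1 : Matrix (Fin N) (Fin N) ℂ) - L)⁻¹) := by
  set M := L - c • (1 : Matrix (Fin N) (Fin N) ℂ) with hM
  have hsc : s - c ≠ 0 := by
    intro h0
    rw [h0] at habs; simp at habs; linarith
  have hgeo : Summable fun n : ℕ => (C / R) * (r / R) ^ n :=
    (summable_geometric_of_lt_one (by positivity) (by rw [div_lt_one hR]; exact hrR)).mul_left _
  have hnormle : ∀ n : ℕ, ‖(((s - c) ^ (n+1))⁻¹) • M ^ n‖ ≤ (C / R) * (r / R) ^ n := by
    intro n
    rw [norm_smul, norm_inv, norm_pow, habs]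
    calc (R ^ (n+1))⁻¹ * ‖M ^ n‖ ≤ (R ^ (n+1))⁻¹ * (C * r ^ n) :=
      mul_le_mul_of_nonneg_left (hb n) (by positivity)
    _ = (C / R) * (r / R) ^ n := by rw [div_pow]; field_simp; ring
  have hsummable : Summable fun n : ℕ => (((s - c) ^ (n+1))⁻¹) • M ^ n :=
    Summable.of_norm (Summable.of_nonneg_of_le (fun n => norm_nonneg _) hnormle hgeo)
  obtain ⟨S, hS⟩ := hsummable
  set v : ℕ → Matrix (Fin N) (Fin N) ℂ := fun n => (((s - c) ^ n)⁻¹) • M ^ n with hv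
  have hvlim : Filter.Tendsto v Filter.atTop (nhds 0) := by
    apply squeeze_zero_norm (a := fun n : ℕ => C * (r / R) ^ n)
    · intro n
      rw [hv]
      simp only
      rw [norm_smul, norm_inv, norm_pow, habs]
      calc (R ^ n)⁻¹ * ‖M ^ n‖ ≤ (R ^ n)⁻¹ * (C * r ^ n) :=
        mul_le_mul_of_nonneg_left (hb n) (by positivity)
      _ = C * (r / R) ^ n := by rw [div_pow]; field_simp
    · have : Filter.Tendsto (fun n : ℕ => (r / R) ^ n) Filter.atTop (nhds 0) :=
        tendsto_pow_atTop_nhds_zero_of_lt_one (by positivity) (by rw [div_lt_one hR]; exact hrR)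
      simpa using this.const_mul C
  have hmul : ∀ n : ℕ, ((((s - c) ^ (n+1))⁻¹) • M ^ n) * (s • (1 : Matrix (Fin N) (Fin N) ℂ) - L)
      = v n - v (n+1) := by
    intro n
    have hexp : s • (1 : Matrix (Fin N) (Fin N) ℂ) - L = (s - c) • (1 : Matrix (Fin N) (Fin N) ℂ) - M := by
      rw [hM, sub_smul]; abel
    have hcoef : ((s - c) ^ (n+1))⁻¹ * (s - c) = ((s - c) ^ n)⁻¹ := by
      field_simp [pow_succ]; ring
    rw [hexp, Matrix.smul_mul, mul_sub, Matrix.mul_smul, mul_one, ← pow_succ,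
      smul_sub, smul_smul, hcoef]
  have hS2 : HasSum (fun n : ℕ => v n - v (n+1)) (S * (s • (1 : Matrix (Fin N) (Fin N) ℂ) - L)) := by
    have := hS.map (AddMonoidHom.mulRight (s • (1 : Matrix (Fin N) (Fin N) ℂ) - L))
      (continuous_mul_right _)
    simpa [Function.comp_def, hmul] using this
  have htel : Filter.Tendsto (fun K => ∑ n ∈ Finset.range K, (v n - v (n+1)))
      Filter.atTop (nhds (v 0 - 0)) := by
    simp_rw [Finset.sum_range_sub' v]
    exact tendsto_const_nhds.sub hvlim
  have heq : S * (s • (1 : Matrix (Fin N) (Fin N) ℂ) - L) = v 0 - 0 :=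
    tendsto_nhds_unique hS2.tendsto_sum_nat htel
  have hv0 : S * (s • (1 : Matrix (Fin N) (Fin N) ℂ) - L) = 1 := by
    rw [heq, hv]; simp
  rw [Matrix.inv_eq_left_inv hv0]
  exact hS

lemma base_integral {N : ℕ} (L : Matrix (Fin N) (Fin N) ℂ) (c : ℂ) {R r C : ℝ}
    (hR : 0 < R) (hr0 : 0 < r) (hrR : r < R) (hC : 0 < C)
    (hb : ∀ n : ℕ, ‖(L - c • (1 : Matrix (Fin N) (Fin N) ℂ)) ^ n‖ ≤ C * r ^ n) :
    (∮ z in C(c, R), (z • (1 : Matrix (Fin N) (Fin N) ℂ) - L)⁻¹)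
      = (2 * π * Complex.I) • (1 : Matrix (Fin N) (Fin N) ℂ) := by
  set M := L - c • (1 : Matrix (Fin N) (Fin N) ℂ) with hM
  set F : ℕ → ℝ → Matrix (Fin N) (Fin N) ℂ := fun n θ =>
    (deriv (circleMap c R) θ) •
      ((((circleMap c R θ - c) ^ (n+1))⁻¹) • M ^ n) with hF
  have hne : ∀ θ : ℝ, circleMap 0 R θ ≠ 0 := fun θ => circleMap_ne_center hR.ne'
  have habs : ∀ θ : ℝ, ‖circleMap c R θ - c‖ = R := by
    intro θ
    rw [circleMap_sub_center, norm_circleMap_zero, abs_of_pos hR]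
  have hswap : HasSum (fun n => ∫ θ in (0:ℝ)..(2*π), F n θ)
      (∫ θ in (0:ℝ)..(2*π),
        (deriv (circleMap c R) θ) • ((circleMap c R θ • (1 : Matrix (Fin N) (Fin N) ℂ) - L)⁻¹)) := by
    apply swap_hasSum F _ (fun n => R * (C / R * (r / R) ^ n))
    · intro n
      rw [hF]
      have hc1 : Continuous fun θ : ℝ => deriv (circleMap c R) θ := by
        simp only [deriv_circleMap]
        exact (continuous_circleMap 0 R).mul continuous_const
      have hc2 : Continuous fun θ : ℝ => ((circleMap c R θ - c) ^ (n+1))⁻¹ := by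
        apply Continuous.inv₀
        · exact ((continuous_circleMap c R).sub continuous_const).pow _
        · intro θ
          rw [circleMap_sub_center]
          exact pow_ne_zero _ (hne θ)
      exact hc1.smul (hc2.smul continuous_const)
    · intro n θ _
      rw [hF]
      have habsI : ‖circleMap 0 R θ * Complex.I‖ = R := by
        rw [norm_mul, norm_circleMap_zero, Complex.norm_I, mul_one, abs_of_pos hR]
      simp only [norm_smul, norm_inv, norm_pow, deriv_circleMap,
        habsI, habs θ]
      have : (R ^ (n+1))⁻¹ * ‖M ^ n‖ ≤ C / R * (r / R) ^ n := by
        calc (R ^ (n+1))⁻¹ * ‖M ^ n‖ ≤ (R ^ (n+1))⁻¹ * (C * r ^ n) :=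
          mul_le_mul_of_nonneg_left (hb n) (by positivity)
        _ = C / R * (r / R) ^ n := by rw [div_pow]; field_simp; ring
      exact mul_le_mul_of_nonneg_left this hR.le
    · exact ((summable_geometric_of_lt_one (by positivity)
        (by rw [div_lt_one hR]; exact hrR)).mul_left _).mul_left _
    · intro θ
      exact (resolvent_hasSum L c (circleMap c R θ) hR (habs θ) hr0 hrR hC hb).const_smul _
  have hterm : ∀ n : ℕ, (∫ θ in (0:ℝ)..(2*π), F n θ)
      = (if n = 0 then (2 * π * Complex.I) • (1 : Matrix (Fin N) (Fin N) ℂ) else 0) := by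
    intro n
    have h1 : (∫ θ in (0:ℝ)..(2*π), F n θ)
        = (∮ z in C(c, R), ((z - c) ^ (n+1))⁻¹) • M ^ n := by
      rw [hF]
      simp only [smul_smul]
      rw [intervalIntegral.integral_smul_const]
      congr 1
    rcases Nat.eq_zero_or_pos n with h | h
    · subst h
      simp only [if_true]
      rw [h1]
      have : (∮ z in C(c, R), ((z - c) ^ (0+1))⁻¹) = 2 * π * Complex.I := by
        simp only [zero_add, pow_one]
        exact circleIntegral.integral_sub_inv_of_mem_ball (Metric.mem_ball_self hR)
      rw [this]
      simp
    · rw [h1]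
      have : (∮ z in C(c, R), ((z - c) ^ (n+1))⁻¹) = 0 := by
        have hzp : ∀ z : ℂ, ((z - c) ^ (n+1))⁻¹ = (z - c) ^ (-((n:ℤ)+1)) := by
          intro z
          rw [_root_.zpow_neg,
            show ((n:ℤ)+1) = ((n+1 : ℕ) : ℤ) by push_cast; ring, zpow_natCast]
        simp_rw [hzp]
        exact circleIntegral.integral_sub_zpow_of_ne (by omega) c c R
      rw [this, if_neg h.ne', zero_smul]
  rw [circleIntegral]
  have h2 : HasSum (fun n : ℕ => (if n = 0 then (2 * π * Complex.I) • (1 : Matrix (Fin N) (Fin N) ℂ) else 0))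
      ((2 * π * Complex.I) • (1 : Matrix (Fin N) (Fin N) ℂ)) := hasSum_ite_eq 0 _
  have h3 := hswap
  simp_rw [hterm] at h3
  exact h3.unique h2

lemma unit_on_circle {N : ℕ} (L : Matrix (Fin N) (Fin N) ℂ) (c z : ℂ) {R : ℝ}
    (hspec : ∀ μ ∈ spectrum ℂ L, ‖μ - c‖ < R)
    (habs : ‖z - c‖ = R) :
    IsUnit (z • (1 : Matrix (Fin N) (Fin N) ℂ) - L).det := by
  have hz : z ∉ spectrum ℂ L := by
    intro hz
    have := hspec z hz
    rw [habs] at this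
    exact lt_irrefl _ this
  have := spectrum.notMem_iff.1 hz
  rw [Algebra.algebraMap_eq_smul_one] at this
  exact ((Matrix.isUnit_iff_isUnit_det _).1 this)

lemma res_continuousAt {N : ℕ} (L : Matrix (Fin N) (Fin N) ℂ) (c : ℂ) {R : ℝ}
    (hspec : ∀ μ ∈ spectrum ℂ L, ‖μ - c‖ < R) {z : ℂ}
    (habs : ‖z - c‖ = R) :
    ContinuousAt (fun w : ℂ => (w • (1 : Matrix (Fin N) (Fin N) ℂ) - L)⁻¹) z := by
  have hA : Continuous fun w : ℂ => w • (1 : Matrix (Fin N) (Fin N) ℂ) - L :=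
    (continuous_id.smul continuous_const).sub continuous_const
  have hdet : (z • (1 : Matrix (Fin N) (Fin N) ℂ) - L).det ≠ 0 := by
    have := unit_on_circle L c z hspec habs
    exact this.ne_zero
  have h1 : ContinuousAt Inv.inv (z • (1 : Matrix (Fin N) (Fin N) ℂ) - L) := by
    apply continuousAt_matrix_inv
    rw [show (Ring.inverse : ℂ → ℂ) = Inv.inv from Ring.inverse_eq_inv']
    exact continuousAt_inv₀ hdet
  exact ContinuousAt.comp (g := Inv.inv)
    (f := fun w : ℂ => w • (1 : Matrix (Fin N) (Fin N) ℂ) - L) h1 hA.continuousAt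

lemma res_comp_continuous {N : ℕ} (L : Matrix (Fin N) (Fin N) ℂ) (c : ℂ) {R : ℝ}
    (hR : 0 < R) (hspec : ∀ μ ∈ spectrum ℂ L, ‖μ - c‖ < R) :
    Continuous fun θ : ℝ =>
      ((circleMap c R θ) • (1 : Matrix (Fin N) (Fin N) ℂ) - L)⁻¹ := by
  rw [continuous_iff_continuousAt]
  intro θ
  have habs : ‖circleMap c R θ - c‖ = R := by
    rw [circleMap_sub_center, norm_circleMap_zero, abs_of_pos hR]
  exact (res_continuousAt L c hspec habs).comp (continuous_circleMap c R).continuousAt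

lemma poly_integral {N : ℕ} (L : Matrix (Fin N) (Fin N) ℂ) (c : ℂ) {R r C : ℝ}
    (hR : 0 < R) (hspec : ∀ μ ∈ spectrum ℂ L, ‖μ - c‖ < R)
    (hr0 : 0 < r) (hrR : r < R) (hC : 0 < C)
    (hb : ∀ n : ℕ, ‖(L - c • (1 : Matrix (Fin N) (Fin N) ℂ)) ^ n‖ ≤ C * r ^ n) (k : ℕ) :
    (∮ z in C(c, R), (z ^ k) • (z • (1 : Matrix (Fin N) (Fin N) ℂ) - L)⁻¹)
      = (2 * π * Complex.I) • (L ^ k) := by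
  haveI : CompleteSpace (Matrix (Fin N) (Fin N) ℂ) := FiniteDimensional.complete ℂ _
  have habs : ∀ θ : ℝ, ‖circleMap c R θ - c‖ = R := by
    intro θ
    rw [circleMap_sub_center, norm_circleMap_zero, abs_of_pos hR]
  have hrescont := res_comp_continuous L c hR hspec
  have hdcont : Continuous fun θ : ℝ => deriv (circleMap c R) θ := by
    simp only [deriv_circleMap]
    exact (continuous_circleMap 0 R).mul continuous_const
  -- pointwise algebraic identity
  have hpt : ∀ z : ℂ, ‖z - c‖ = R →
      (z ^ k) • (z • (1 : Matrix (Fin N) (Fin N) ℂ) - L)⁻¹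
        = (∑ i ∈ Finset.range k, (z ^ i) • L ^ (k - 1 - i))
          + L ^ k * (z • (1 : Matrix (Fin N) (Fin N) ℂ) - L)⁻¹ := by
    intro z hz
    have hcomm : Commute (z • (1 : Matrix (Fin N) (Fin N) ℂ)) L := by
      show _ = _
      rw [Matrix.smul_mul, Matrix.mul_smul, one_mul, mul_one]
    have hgs := hcomm.geom_sum₂_mul k
    have hinv := Matrix.mul_nonsing_inv _ (unit_on_circle L c z hspec hz)
    have h1 : ((z • (1 : Matrix (Fin N) (Fin N) ℂ)) ^ k - L ^ k)
        * (z • (1 : Matrix (Fin N) (Fin N) ℂ) - L)⁻¹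
        = ∑ i ∈ Finset.range k, (z • (1 : Matrix (Fin N) (Fin N) ℂ)) ^ i * L ^ (k - 1 - i) := by
      rw [← hgs, Matrix.mul_assoc, hinv, Matrix.mul_one]
    have h2 : (z • (1 : Matrix (Fin N) (Fin N) ℂ)) ^ k = (z ^ k) • (1 : Matrix (Fin N) (Fin N) ℂ) := by
      rw [smul_pow, one_pow]
    rw [h2, Matrix.sub_mul, Matrix.smul_mul, Matrix.one_mul] at h1
    have h3 : ∀ i : ℕ, (z • (1 : Matrix (Fin N) (Fin N) ℂ)) ^ i * L ^ (k - 1 - i)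
        = (z ^ i) • L ^ (k - 1 - i) := by
      intro i
      rw [smul_pow, one_pow, Matrix.smul_mul, Matrix.one_mul]
    simp_rw [h3] at h1
    rw [eq_comm, ← h1]
    abel
  -- rewrite the circle integral
  rw [circleIntegral]
  have hintgr : ∀ θ : ℝ, (deriv (circleMap c R) θ) •
      ((circleMap c R θ ^ k) • ((circleMap c R θ) • (1 : Matrix (Fin N) (Fin N) ℂ) - L)⁻¹)
      = (∑ i ∈ Finset.range k, (deriv (circleMap c R) θ * circleMap c R θ ^ i) • L ^ (k - 1 - i))
        + (deriv (circleMap c R) θ) •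
            (L ^ k * ((circleMap c R θ) • (1 : Matrix (Fin N) (Fin N) ℂ) - L)⁻¹) := by
    intro θ
    rw [hpt _ (habs θ), smul_add, Finset.smul_sum]
    simp_rw [smul_smul]
  simp_rw [hintgr]
  have hint1 :=
    fun i : ℕ => ((hdcont.mul ((continuous_circleMap c R).pow i)).smul (continuous_const (y := L ^ (k - 1 - i)))).intervalIntegrable (μ := MeasureTheory.volume) 0 (2*π)
  have hint2 :=
    (hdcont.smul ((continuous_const (y := L ^ k)).mul hrescont)).intervalIntegrable (μ := MeasureTheory.volume) 0 (2*π)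
  have hint1s := (continuous_finset_sum (Finset.range k) fun i _ =>
      (hdcont.mul ((continuous_circleMap c R).pow i)).smul (continuous_const (y := L ^ (k - 1 - i)))).intervalIntegrable
      (μ := MeasureTheory.volume) 0 (2*π)
  rw [intervalIntegral.integral_add (f := fun θ : ℝ => ∑ i ∈ Finset.range k,
      (deriv (circleMap c R) θ * circleMap c R θ ^ i) • L ^ (k - 1 - i))
    (g := fun θ : ℝ => (deriv (circleMap c R) θ) •
      (L ^ k * ((circleMap c R θ) • (1 : Matrix (Fin N) (Fin N) ℂ) - L)⁻¹)) hint1s hint2]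
  have hzero : (∫ θ in (0:ℝ)..(2*π),
      ∑ i ∈ Finset.range k, (deriv (circleMap c R) θ * circleMap c R θ ^ i) • L ^ (k - 1 - i)) = 0 := by
    rw [intervalIntegral.integral_finset_sum (f := fun i θ =>
      (deriv (circleMap c R) θ * circleMap c R θ ^ i) • L ^ (k - 1 - i)) (fun i _ => hint1 i)]
    apply Finset.sum_eq_zero
    intro i _
    rw [intervalIntegral.integral_smul_const]
    have hzi : (∮ z in C(c, R), z ^ i) = 0 := by
      have h2 : ((i : ℤ)) ≠ -1 := by omega
      have := circleIntegral.integral_sub_zpow_of_ne h2 c 0 R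
      simp_rw [sub_zero, zpow_natCast] at this
      exact this
    rw [circleIntegral] at hzi
    rw [show (∫ θ in (0:ℝ)..(2*π), deriv (circleMap c R) θ * circleMap c R θ ^ i)
      = ∫ θ in (0:ℝ)..(2*π), deriv (circleMap c R) θ • (circleMap c R θ) ^ i from rfl, hzi,
      zero_smul]
  rw [hzero, zero_add]
  -- the remaining term
  have hT : ∀ θ : ℝ, (deriv (circleMap c R) θ) •
      (L ^ k * ((circleMap c R θ) • (1 : Matrix (Fin N) (Fin N) ℂ) - L)⁻¹)
      = L ^ k * ((deriv (circleMap c R) θ) •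
          ((circleMap c R θ) • (1 : Matrix (Fin N) (Fin N) ℂ) - L)⁻¹) := by
    intro θ
    rw [Matrix.mul_smul]
  simp_rw [hT]
  set T : Matrix (Fin N) (Fin N) ℂ →L[ℂ] Matrix (Fin N) (Fin N) ℂ :=
    LinearMap.toContinuousLinearMap (LinearMap.mulLeft ℂ (L ^ k)) with hTdef
  have hTapp : ∀ A : Matrix (Fin N) (Fin N) ℂ, T A = L ^ k * A := fun A => rfl
  simp_rw [← hTapp]
  erw [ContinuousLinearMap.intervalIntegral_comp_comm T (f := fun θ => (deriv (circleMap c R) θ) •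
      ((circleMap c R θ) • (1 : Matrix (Fin N) (Fin N) ℂ) - L)⁻¹)
    ((hdcont.smul hrescont).intervalIntegrable _ _)]
  rw [show (∫ θ in (0:ℝ)..(2*π), (deriv (circleMap c R) θ) •
      ((circleMap c R θ) • (1 : Matrix (Fin N) (Fin N) ℂ) - L)⁻¹)
      = ∮ z in C(c, R), (z • (1 : Matrix (Fin N) (Fin N) ℂ) - L)⁻¹ from rfl]
  rw [base_integral L c hR hr0 hrR hC hb]; erw [hTapp]
  rw [mul_smul_comm, mul_one]


/-- `φ_ℓ` as an entire function: `φ_ℓ(s) = ∑_{i=0}^∞ s^i/(i+ℓ)!`. -/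
noncomputable def phiC (ℓ : ℕ) (s : ℂ) : ℂ := ∑' i : ℕ, s ^ i / ((i + ℓ)! : ℂ)

/-- `φ_ℓ(L) = ∑_{i=0}^∞ L^i/(i+ℓ)!` for a square complex matrix `L`. -/
noncomputable def phiMat {N : ℕ} (ℓ : ℕ) (L : Matrix (Fin N) (Fin N) ℂ) :
    Matrix (Fin N) (Fin N) ℂ :=
  ∑' i : ℕ, (((i + ℓ)! : ℂ)⁻¹) • L ^ i

/-- Cauchy-integral representation of `φ_ℓ(L)` over a positively oriented circle of radius `R`
centered at `c` enclosing the spectrum of `L`. -/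
theorem phiMat_cauchy_integral {N : ℕ} (ℓ : ℕ) (L : Matrix (Fin N) (Fin N) ℂ)
    (c : ℂ) (R : ℝ) (hR : 0 < R)
    (hspec : ∀ μ ∈ spectrum ℂ L, ‖μ - c‖ < R) :
    phiMat ℓ L = (2 * (π : ℂ) * Complex.I)⁻¹ •
      ∫ θ in (0:ℝ)..(2 * π),
        (Complex.I * R * Complex.exp (θ * Complex.I) *
            phiC ℓ (c + R * Complex.exp (θ * Complex.I))) •
          ((c + R * Complex.exp (θ * Complex.I)) • (1 : Matrix (Fin N) (Fin N) ℂ) - L)⁻¹ := by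
  haveI : CompleteSpace (Matrix (Fin N) (Fin N) ℂ) := FiniteDimensional.complete ℂ _
  -- power bounds for `L - c•1` and for `L`
  obtain ⟨r, C, hr0, hrR, hC0, hbent⟩ := exists_entry_pow_bound
      (L - c • (1 : Matrix (Fin N) (Fin N) ℂ)) R hR (by
    intro μ hμ
    have hmem : μ + c ∈ spectrum ℂ L := by
      rw [spectrum.mem_iff] at hμ ⊢
      rw [Algebra.algebraMap_eq_smul_one] at hμ ⊢
      convert hμ using 1
      rw [add_smul]
      abel
    have := hspec _ hmem
    simpa using this)
  have hb : ∀ n : ℕ, ‖(L - c • (1 : Matrix (Fin N) (Fin N) ℂ)) ^ n‖ ≤ C * r ^ n := by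
    intro n
    rw [Matrix.norm_le_iff (by positivity)]
    intro i j
    exact hbent n i j
  obtain ⟨r₁, C₁, hr₁0, hr₁R, hC₁0, hbent₁⟩ := exists_entry_pow_bound L (‖c‖ + R)
    (by positivity) (fun μ hμ => by
      have h1 := hspec μ hμ
      calc ‖μ‖ = ‖μ - c + c‖ := by ring_nf
      _ ≤ ‖μ - c‖ + ‖c‖ := norm_add_le _ _
      _ < ‖c‖ + R := by linarith)
  have hbL : ∀ n : ℕ, ‖L ^ n‖ ≤ C₁ * r₁ ^ n := by
    intro n
    rw [Matrix.norm_le_iff (by positivity)]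
    intro i j
    exact hbent₁ n i j
  -- summability of the `phiMat` series
  have hsum1 : Summable (fun k : ℕ => (((k + ℓ)! : ℂ))⁻¹ • L ^ k) := by
    apply Summable.of_norm
    apply Summable.of_nonneg_of_le (fun k => norm_nonneg _) ?_
      ((Real.summable_pow_div_factorial r₁).mul_left C₁)
    intro k
    rw [norm_smul]
    have h1 : ‖(((k + ℓ)! : ℂ))⁻¹‖ ≤ ((k ! : ℝ))⁻¹ := by
      rw [norm_inv, Complex.norm_natCast]
      apply inv_anti₀ (by positivity)
      exact_mod_cast Nat.factorial_le (Nat.le_add_right k ℓ)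
    calc ‖(((k + ℓ)! : ℂ))⁻¹‖ * ‖L ^ k‖ ≤ ((k ! : ℝ))⁻¹ * (C₁ * r₁ ^ k) :=
      mul_le_mul h1 (hbL k) (norm_nonneg _) (by positivity)
    _ = C₁ * (r₁ ^ k / k !) := by ring
  -- the φ series
  have hφ : ∀ z : ℂ, HasSum (fun k : ℕ => z ^ k / ((k + ℓ)! : ℂ)) (phiC ℓ z) := by
    intro z
    have hs : Summable (fun k : ℕ => z ^ k / ((k + ℓ)! : ℂ)) := by
      apply Summable.of_norm
      apply Summable.of_nonneg_of_le (fun k => norm_nonneg _) ?_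
        (Real.summable_pow_div_factorial ‖z‖)
      intro k
      rw [norm_div, norm_pow, Complex.norm_natCast]
      have hfac : ((k ! : ℝ)) ≤ (((k + ℓ)! : ℝ)) := by
        exact_mod_cast Nat.factorial_le (Nat.le_add_right k ℓ)
      exact div_le_div_of_nonneg_left (by positivity) (by positivity) hfac
    simpa [phiC] using hs.hasSum
  -- sup bound of the resolvent on the sphere
  have habs : ∀ θ : ℝ, ‖circleMap c R θ - c‖ = R := by
    intro θ
    rw [circleMap_sub_center, norm_circleMap_zero, abs_of_pos hR]
  obtain ⟨B, hB⟩ : ∃ B : ℝ, ∀ θ : ℝ,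
      ‖((circleMap c R θ) • (1 : Matrix (Fin N) (Fin N) ℂ) - L)⁻¹‖ ≤ B := by
    have hcs : IsCompact (Metric.sphere c R) := isCompact_sphere c R
    have hco : ContinuousOn (fun z : ℂ => (z • (1 : Matrix (Fin N) (Fin N) ℂ) - L)⁻¹)
        (Metric.sphere c R) := by
      intro z hz
      have : ‖z - c‖ = R := by
        rw [← dist_eq_norm]
        exact hz
      exact (res_continuousAt L c hspec this).continuousWithinAt
    obtain ⟨B, hB⟩ := hcs.exists_bound_of_continuousOn hco
    exact ⟨B, fun θ => hB _ (circleMap_mem_sphere c hR.le θ)⟩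
  have hB0 : 0 ≤ B := le_trans (norm_nonneg _) (hB 0)
  have hrescont := res_comp_continuous L c hR hspec
  have hdcont : Continuous fun θ : ℝ => deriv (circleMap c R) θ := by
    simp only [deriv_circleMap]
    exact (continuous_circleMap 0 R).mul continuous_const
  have habsI : ∀ θ : ℝ, ‖deriv (circleMap c R) θ‖ = R := by
    intro θ
    rw [deriv_circleMap, norm_mul, norm_circleMap_zero, Complex.norm_I,
      mul_one, abs_of_pos hR]
  have habsz : ∀ θ : ℝ, ‖circleMap c R θ‖ ≤ ‖c‖ + R := by
    intro θ
    calc ‖circleMap c R θ‖ = ‖c + (circleMap c R θ - c)‖ := by ring_nf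
    _ ≤ ‖c‖ + ‖circleMap c R θ - c‖ := norm_add_le _ _
    _ = ‖c‖ + R := by rw [habs θ]
  -- the big swap
  have hswap := swap_hasSum
    (F := fun (k : ℕ) (θ : ℝ) => (deriv (circleMap c R) θ) •
      ((circleMap c R θ ^ k / ((k + ℓ)! : ℂ)) •
        ((circleMap c R θ) • (1 : Matrix (Fin N) (Fin N) ℂ) - L)⁻¹))
    (g := fun θ : ℝ => (deriv (circleMap c R) θ) •
      ((phiC ℓ (circleMap c R θ)) •
        ((circleMap c R θ) • (1 : Matrix (Fin N) (Fin N) ℂ) - L)⁻¹))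
    (bound := fun k : ℕ => R * (((‖c‖ + R) ^ k / k !) * B))
    (by
      intro k
      exact hdcont.smul ((((continuous_circleMap c R).pow k).div_const _).smul hrescont))
    (by
      intro k θ _
      have h1 : ‖(deriv (circleMap c R) θ) •
          ((circleMap c R θ ^ k / ((k + ℓ)! : ℂ)) •
            ((circleMap c R θ) • (1 : Matrix (Fin N) (Fin N) ℂ) - L)⁻¹)‖
          = R * (‖circleMap c R θ‖ ^ k / (((k + ℓ)! : ℝ)) *
              ‖((circleMap c R θ) • (1 : Matrix (Fin N) (Fin N) ℂ) - L)⁻¹‖) := by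
        rw [norm_smul, norm_smul, habsI θ, norm_div, norm_pow, Complex.norm_natCast]
      rw [h1]
      have h2 : ‖circleMap c R θ‖ ^ k ≤ (‖c‖ + R) ^ k :=
        pow_le_pow_left₀ (norm_nonneg _) (habsz θ) k
      have h3 : ‖((circleMap c R θ) • (1 : Matrix (Fin N) (Fin N) ℂ) - L)⁻¹‖ ≤ B := hB θ
      have hfac : ((k ! : ℝ)) ≤ (((k + ℓ)! : ℝ)) := by
        exact_mod_cast Nat.factorial_le (Nat.le_add_right k ℓ)
      apply mul_le_mul_of_nonneg_left _ hR.le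
      apply mul_le_mul _ h3 (norm_nonneg _) (by positivity)
      calc ‖circleMap c R θ‖ ^ k / (((k + ℓ)! : ℝ))
          ≤ (‖c‖ + R) ^ k / (((k + ℓ)! : ℝ)) := by
            gcongr
      _ ≤ (‖c‖ + R) ^ k / (k ! : ℝ) :=
          div_le_div_of_nonneg_left (by positivity) (by positivity) hfac)
    (by
      exact ((Real.summable_pow_div_factorial (‖c‖ + R)).mul_right B).mul_left R)
    (fun θ => ((hφ (circleMap c R θ)).smul_const _).const_smul _)
  -- evaluate the term integrals
  have hterm : ∀ k : ℕ, (∫ θ in (0:ℝ)..(2*π), (deriv (circleMap c R) θ) •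
      ((circleMap c R θ ^ k / ((k + ℓ)! : ℂ)) •
        ((circleMap c R θ) • (1 : Matrix (Fin N) (Fin N) ℂ) - L)⁻¹))
      = (((k + ℓ)! : ℂ))⁻¹ • ((2 * π * Complex.I) • L ^ k) := by
    intro k
    have hptw : ∀ θ : ℝ, (deriv (circleMap c R) θ) •
        ((circleMap c R θ ^ k / ((k + ℓ)! : ℂ)) •
          ((circleMap c R θ) • (1 : Matrix (Fin N) (Fin N) ℂ) - L)⁻¹)
        = (((k + ℓ)! : ℂ))⁻¹ • ((deriv (circleMap c R) θ) •
            ((circleMap c R θ ^ k) •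
              ((circleMap c R θ) • (1 : Matrix (Fin N) (Fin N) ℂ) - L)⁻¹)) := by
      intro θ
      simp only [smul_smul]
      congr 1
      field_simp
    simp_rw [hptw]
    rw [intervalIntegral.integral_smul]
    congr 1
    exact poly_integral L c hR hspec hr0 hrR hC0 hb k
  simp_rw [hterm] at hswap
  -- the `phiMat` side
  have hA : HasSum (fun k : ℕ => (((k + ℓ)! : ℂ))⁻¹ • ((2 * π * Complex.I) • L ^ k))
      ((2 * π * Complex.I) • phiMat ℓ L) := by
    have h0 : HasSum (fun k : ℕ => (((k + ℓ)! : ℂ))⁻¹ • L ^ k) (phiMat ℓ L) := hsum1.hasSum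
    have := h0.const_smul (2 * (π:ℂ) * Complex.I)
    convert this using 2 with k
    rw [smul_comm]
  have hEq := hswap.unique hA
  -- identify the goal integral
  have hgoal : (∫ θ in (0:ℝ)..(2 * π),
        (Complex.I * R * Complex.exp (θ * Complex.I) *
            phiC ℓ (c + R * Complex.exp (θ * Complex.I))) •
          ((c + R * Complex.exp (θ * Complex.I)) • (1 : Matrix (Fin N) (Fin N) ℂ) - L)⁻¹)
      = ∫ θ in (0:ℝ)..(2*π), (deriv (circleMap c R) θ) •
          ((phiC ℓ (circleMap c R θ)) •
            ((circleMap c R θ) • (1 : Matrix (Fin N) (Fin N) ℂ) - L)⁻¹) := by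
    apply intervalIntegral.integral_congr
    intro θ _
    simp only [circleMap, deriv_circleMap, zero_add]
    rw [smul_smul]
    congr 1
    ring
  have hne : (2 * (π:ℂ) * Complex.I) ≠ 0 :=
    mul_ne_zero (mul_ne_zero two_ne_zero (by exact_mod_cast Real.pi_ne_zero)) Complex.I_ne_zero
  rw [hgoal, hEq, smul_smul, inv_mul_cancel₀ hne, one_smul]
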